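/- Let Y_V = (Y_v)_{v∈V} be a finite family of binary random variables and Z, X binary random variables, with P(Y_D = 1_D | Z=z, X=x) > 0 for every nonempty D ⊆ V and all z,x ∈ {0,1}, and 0 < P(Z=1|X=x) < 1. For each D ⊆ V define the product outcome Y^D = ∏_{v∈D} Y_v and the log-mean parameters θ_{D|X.Z} = log[P(Y^D=1|Z=0,X=1)/P(Y^D=1|Z=0,X=0)], θ_{D|Z.X} = log[P(Y^D=1|Z=1,X=0)/P(Y^D=1|Z=0,X=0)], θ_{D|ZX} = log of the interaction relative risk, θ_{D|X} = log[P(Y^D=1|X=1)/P(Y^D=1|X=0)], α_Z = log P(Z=1|X=0), θ_{Z|X} = log[P(Z=1|X=1)/P(Z=1|X=0)]. Then for every nonempty D ⊆ V, θ_{D|X} = θ_{D|X.Z} + λ_D, where λ_D = log{[exp(θ_{D|Z.X}+θ_{D|ZX})·exp(α_Z+θ_{Z|X}) + 1 − exp(α_Z+θ_{Z|X})]/[exp(θ_{D|Z.X})·exp(α_Z) + 1 − exp(α_Z)]}. -/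

import Mathlib

open MeasureTheory

variable {Ω : Type*} [MeasurableSpace Ω]

/-- Event that binary variable `W` takes value `b`. -/
def ev (W : Ω → Bool) (b : Bool) : Set Ω := {ω | W ω = b}

/-- Probability of a set. -/
noncomputable def pr (μ : Measure Ω) (A : Set Ω) : ℝ := (μ A).toReal

/-- Conditional probability P(A | B). -/
noncomputable def cpr (μ : Measure Ω) (A B : Set Ω) : ℝ := pr μ (A ∩ B) / pr μ B

/-- P(Y = 1 | Z = z, X = x). -/
noncomputable def pY (μ : Measure Ω) (Y Z X : Ω → Bool) (z x : Bool) : ℝ :=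
  cpr μ (ev Y true) (ev Z z ∩ ev X x)

/-- P(Y = 1 | X = x). -/
noncomputable def pYm (μ : Measure Ω) (Y X : Ω → Bool) (x : Bool) : ℝ :=
  cpr μ (ev Y true) (ev X x)

/-- P(Y = 1 | Z = z). -/
noncomputable def pYz (μ : Measure Ω) (Y Z : Ω → Bool) (z : Bool) : ℝ :=
  cpr μ (ev Y true) (ev Z z)

/-- P(Z = 1 | X = x). -/
noncomputable def pZ (μ : Measure Ω) (Z X : Ω → Bool) (x : Bool) : ℝ :=
  cpr μ (ev Z true) (ev X x)

/-- P(Y^D = 1 | Z = z, X = x) for the product outcome over D. -/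
noncomputable def pD {V : Type*} (μ : Measure Ω) (Y : V → Ω → Bool) (D : Finset V)
    (Z X : Ω → Bool) (z x : Bool) : ℝ :=
  cpr μ {ω | ∀ v ∈ D, Y v ω = true} (ev Z z ∩ ev X x)

/-- P(Y^D = 1 | X = x) for the product outcome over D. -/
noncomputable def pDm {V : Type*} (μ : Measure Ω) (Y : V → Ω → Bool) (D : Finset V)
    (X : Ω → Bool) (x : Bool) : ℝ :=
  cpr μ {ω | ∀ v ∈ D, Y v ω = true} (ev X x)

/-- P(Z_U = i_U | X = x) for a family of intermediate variables. -/
noncomputable def pZU {U : Type*} (μ : Measure Ω) (Z : U → Ω → Bool) (X : Ω → Bool)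
    (i : U → Bool) (x : Bool) : ℝ :=
  cpr μ {ω | ∀ u, Z u ω = i u} (ev X x)

/-- P(Y^D = 1 | Z_U = i_U, X = x). -/
noncomputable def pDU {V U : Type*} (μ : Measure Ω) (Y : V → Ω → Bool) (D : Finset V)
    (Z : U → Ω → Bool) (X : Ω → Bool) (i : U → Bool) (x : Bool) : ℝ :=
  cpr μ {ω | ∀ v ∈ D, Y v ω = true} ({ω | ∀ u, Z u ω = i u} ∩ ev X x)

lemma pr_split (μ : Measure Ω) [IsProbabilityMeasure μ] (Z : Ω → Bool)
    (hZm : Measurable Z) (S : Set Ω) (hS : MeasurableSet S) :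
    pr μ S = pr μ (S ∩ ev Z true) + pr μ (S ∩ ev Z false) := by
  have hU : S = (S ∩ ev Z true) ∪ (S ∩ ev Z false) := by
    ext ω
    simp only [Set.mem_union, Set.mem_inter_iff, ev, Set.mem_setOf_eq]
    cases h : Z ω <;> simp [h]
  have hmt : MeasurableSet (ev Z true) := hZm (measurableSet_singleton true)
  have hd : Disjoint (S ∩ ev Z true) (S ∩ ev Z false) := by
    rw [Set.disjoint_iff]
    rintro ω ⟨⟨-, h1⟩, ⟨-, h2⟩⟩
    simp [ev, Set.mem_setOf_eq] at h1 h2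
    rw [h1] at h2; exact absurd h2 (by simp)
  conv_lhs => rw [hU]
  unfold pr
  rw [measure_union hd (hS.inter (hZm (measurableSet_singleton false))),
    ENNReal.toReal_add (measure_ne_top μ _) (measure_ne_top μ _)]

theorem stmt_8 {V : Type*} (μ : Measure Ω) [IsProbabilityMeasure μ]
    (Y : V → Ω → Bool) (Z X : Ω → Bool)
    (hYm : ∀ v, Measurable (Y v)) (hZm : Measurable Z) (hXm : Measurable X)
    (hXpos : ∀ x : Bool, 0 < pr μ (ev X x))
    (hZX : ∀ z x : Bool, 0 < pr μ (ev Z z ∩ ev X x))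
    (hDpos : ∀ (D : Finset V) (z x : Bool), D.Nonempty → 0 < pD μ Y D Z X z x)
    (hZ01 : ∀ x : Bool, 0 < pZ μ Z X x ∧ pZ μ Z X x < 1) :
    ∀ D : Finset V, D.Nonempty →
      Real.log (pDm μ Y D X true / pDm μ Y D X false) =
        Real.log (pD μ Y D Z X false true / pD μ Y D Z X false false) +
          Real.log
            ((Real.exp (Real.log (pD μ Y D Z X true false / pD μ Y D Z X false false) +
                  Real.log ((pD μ Y D Z X true true * pD μ Y D Z X false false) /
                    (pD μ Y D Z X true false * pD μ Y D Z X false true))) *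
                Real.exp (Real.log (pZ μ Z X false) +
                  Real.log (pZ μ Z X true / pZ μ Z X false)) +
                1 - Real.exp (Real.log (pZ μ Z X false) +
                  Real.log (pZ μ Z X true / pZ μ Z X false))) /
              (Real.exp (Real.log (pD μ Y D Z X true false / pD μ Y D Z X false false)) *
                  Real.exp (Real.log (pZ μ Z X false)) +
                1 - Real.exp (Real.log (pZ μ Z X false)))) := by
  intro D hD
  -- abbreviations
  set a11 := pD μ Y D Z X true true with ha11def
  set a10 := pD μ Y D Z X true false with ha10def
  set a01 := pD μ Y D Z X false true with ha01def
  set a00 := pD μ Y D Z X false false with ha00def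
  set p1 := pZ μ Z X true with hp1def
  set p0 := pZ μ Z X false with hp0def
  have ha11 : 0 < a11 := hDpos D true true hD
  have ha10 : 0 < a10 := hDpos D true false hD
  have ha01 : 0 < a01 := hDpos D false true hD
  have ha00 : 0 < a00 := hDpos D false false hD
  have hp1 : 0 < p1 := (hZ01 true).1
  have hp1' : p1 < 1 := (hZ01 true).2
  have hp0 : 0 < p0 := (hZ01 false).1
  have hp0' : p0 < 1 := (hZ01 false).2
  -- measurability of the product event
  have hA : MeasurableSet {ω | ∀ v ∈ D, Y v ω = true} := by
    have : {ω | ∀ v ∈ D, Y v ω = true} = ⋂ v ∈ (↑D : Set V), (Y v) ⁻¹' {true} := by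
      ext ω; simp
    rw [this]
    exact MeasurableSet.biInter D.countable_toSet
      (fun v _ => hYm v (measurableSet_singleton true))
  -- total probability decomposition:  pDm x = a1x * q1x + a0x * q0x
  have key : ∀ x : Bool,
      pDm μ Y D X x = pD μ Y D Z X true x * pZ μ Z X x
        + pD μ Y D Z X false x * (1 - pZ μ Z X x) := by
    intro x
    have hXms : MeasurableSet (ev X x) := hXm (measurableSet_singleton x)
    have hsplit := pr_split μ Z hZm ({ω | ∀ v ∈ D, Y v ω = true} ∩ ev X x) (hA.inter hXms)
    have hXsplit := pr_split μ Z hZm (ev X x) hXms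
    have hone : 1 - pZ μ Z X x = pr μ (ev Z false ∩ ev X x) / pr μ (ev X x) := by
      have hxne : pr μ (ev X x) ≠ 0 := (hXpos x).ne'
      rw [pZ, cpr]
      field_simp
      have : pr μ (ev X x) = pr μ (ev Z true ∩ ev X x) + pr μ (ev Z false ∩ ev X x) := by
        rw [hXsplit]; congr 1 <;> (congr 1; ext ω; simp [ev]; tauto)
      linarith [this]
    have hcomm : ∀ z : Bool, {ω | ∀ v ∈ D, Y v ω = true} ∩ ev X x ∩ ev Z z
        = {ω | ∀ v ∈ D, Y v ω = true} ∩ (ev Z z ∩ ev X x) := by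
      intro z; ext ω; simp [ev, Set.mem_inter_iff, Set.mem_setOf_eq]; tauto
    rw [hcomm, hcomm] at hsplit
    have hZXt := (hZX true x).ne'
    have hZXf := (hZX false x).ne'
    rw [pDm, cpr, hsplit, hone, pD, pD, pZ, cpr, cpr, cpr]
    have h1 : pr μ ({ω | ∀ v ∈ D, Y v ω = true} ∩ (ev Z true ∩ ev X x))
        / pr μ (ev Z true ∩ ev X x) * (pr μ (ev Z true ∩ ev X x) / pr μ (ev X x))
        = pr μ ({ω | ∀ v ∈ D, Y v ω = true} ∩ (ev Z true ∩ ev X x)) / pr μ (ev X x) := by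
      field_simp
    have h2 : pr μ ({ω | ∀ v ∈ D, Y v ω = true} ∩ (ev Z false ∩ ev X x))
        / pr μ (ev Z false ∩ ev X x) * (pr μ (ev Z false ∩ ev X x) / pr μ (ev X x))
        = pr μ ({ω | ∀ v ∈ D, Y v ω = true} ∩ (ev Z false ∩ ev X x)) / pr μ (ev X x) := by
      field_simp
    have hq1 : pr μ (ev Z true ∩ ev X x) / pr μ (ev X x)
        = pr μ (ev Z true ∩ ev X x) / pr μ (ev X x) := rfl
    rw [h1, h2, ← add_div]
  have hpm1 : pDm μ Y D X true = a01 * ((a11 / a01) * p1 + (1 - p1)) := by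
    rw [key true]; field_simp; ring
  have hpm0 : pDm μ Y D X false = a00 * ((a10 / a00) * p0 + (1 - p0)) := by
    rw [key false]; field_simp; ring
  -- simplify the exp/log expressions
  have e1 : Real.exp (Real.log (a10 / a00) + Real.log ((a11 * a00) / (a10 * a01)))
      = a11 / a01 := by
    rw [Real.exp_add, Real.exp_log (div_pos ha10 ha00),
      Real.exp_log (div_pos (mul_pos ha11 ha00) (mul_pos ha10 ha01))]
    field_simp
  have e2 : Real.exp (Real.log p0 + Real.log (p1 / p0)) = p1 := by
    rw [Real.exp_add, Real.exp_log hp0, Real.exp_log (div_pos hp1 hp0)]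
    field_simp
  have e3 : Real.exp (Real.log (a10 / a00)) = a10 / a00 :=
    Real.exp_log (div_pos ha10 ha00)
  have e4 : Real.exp (Real.log p0) = p0 := Real.exp_log hp0
  rw [e1, e2, e3, e4, hpm1, hpm0]
  set N := (a11 / a01) * p1 + (1 - p1) with hNdef
  set M := (a10 / a00) * p0 + (1 - p0) with hMdef
  have hN : 0 < N := by
    have := mul_pos (div_pos ha11 ha01) hp1
    rw [hNdef]; nlinarith
  have hM : 0 < M := by
    have := mul_pos (div_pos ha10 ha00) hp0
    rw [hMdef]; nlinarith
  have harr1 : a11 / a01 * p1 + 1 - p1 = N := by rw [hNdef]; ring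
  have harr2 : a10 / a00 * p0 + 1 - p0 = M := by rw [hMdef]; ring
  rw [harr1, harr2]
  rw [show a01 * N / (a00 * M) = (a01 / a00) * (N / M) by field_simp]
  rw [Real.log_mul (div_pos ha01 ha00).ne' (div_pos hN hM).ne']
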